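/- (Energy conservation of the linearized EQ system.) Let N be a positive natural number, and work in ℝ^N with the standard inner product ⟨·,·⟩ and componentwise product ⊙. Let S : ℝ^N → ℝ^N be a linear map with ⟨S v, v⟩ = 0 for all v, and let a : ℝ → ℝ^N be any function (the interpolant of previous solutions). Let u, q : ℝ → ℝ^N be differentiable and satisfy u'(t) = S( u(t) + (1/6) q(t) + (1/3) a(t) ⊙ u(t) ) and q'(t) = 2 a(t) ⊙ u'(t) for all t. Then E(t) = ½ ⟨u(t), u(t)⟩ + (1/6) ⟨u(t), q(t)⟩ is constant in t. -/

import Mathlib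

open scoped RealInnerProductSpace

/-- Componentwise (pointwise) product on `EuclideanSpace ℝ (Fin N)`. -/
def cwMul {N : ℕ} (v w : EuclideanSpace ℝ (Fin N)) : EuclideanSpace ℝ (Fin N) :=
  WithLp.toLp 2 (fun i => v i * w i)

lemma cwMul_inner_move {N : ℕ} (x v w : EuclideanSpace ℝ (Fin N)) :
    ⟪v, cwMul x w⟫ = ⟪cwMul x v, w⟫ := by
  simp only [cwMul, PiLp.toLp_apply, PiLp.inner_apply, RCLike.inner_apply, conj_trivial]
  exact Finset.sum_congr rfl fun i _ => by ring

/-- the linearized EQ system (with interpolant a(t)) conserves the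
quadratic energy E(t) = ½⟨u,u⟩ + (1/6)⟨u,q⟩. -/
theorem linearized_eq_system_energy_conservation
    (N : ℕ) (hN : 0 < N)
    (S : EuclideanSpace ℝ (Fin N) →ₗ[ℝ] EuclideanSpace ℝ (Fin N))
    (hS : ∀ v : EuclideanSpace ℝ (Fin N), ⟪S v, v⟫ = 0)
    (a : ℝ → EuclideanSpace ℝ (Fin N))
    (u q : ℝ → EuclideanSpace ℝ (Fin N))
    (hu : Differentiable ℝ u) (hq : Differentiable ℝ q)
    (hueq : ∀ t, deriv u t
      = S (u t + (1/6 : ℝ) • q t + (1/3 : ℝ) • cwMul (a t) (u t)))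
    (hqeq : ∀ t, deriv q t = (2 : ℝ) • cwMul (a t) (deriv u t)) :
    ∀ t₁ t₂ : ℝ,
      (1/2 : ℝ) * ⟪u t₁, u t₁⟫ + (1/6 : ℝ) * ⟪u t₁, q t₁⟫
        = (1/2 : ℝ) * ⟪u t₂, u t₂⟫ + (1/6 : ℝ) * ⟪u t₂, q t₂⟫ := by
  set E : ℝ → ℝ := fun t => (1/2 : ℝ) * ⟪u t, u t⟫ + (1/6 : ℝ) * ⟪u t, q t⟫ with hE
  have key : ∀ t, HasDerivAt E 0 t := by
    intro t
    have hu' := (hu t).hasDerivAt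
    have hq' := (hq t).hasDerivAt
    have h1 := ((hu'.inner ℝ hu').const_mul (1/2 : ℝ)).add
      ((hu'.inner ℝ hq').const_mul (1/6 : ℝ))
    refine (show HasDerivAt E _ t from h1).congr_deriv ?_
    set w := u t + (1/6 : ℝ) • q t + (1/3 : ℝ) • cwMul (a t) (u t) with hw
    have hsym : ⟪u t, deriv u t⟫ = ⟪deriv u t, u t⟫ := real_inner_comm _ _
    have hq'' : ⟪u t, deriv q t⟫ = (2 : ℝ) * ⟪cwMul (a t) (u t), deriv u t⟫ := by
      rw [hqeq t, real_inner_smul_right, cwMul_inner_move]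
    have hmain : ⟪deriv u t, w⟫ = 0 := by
      rw [hueq t]; exact hS w
    have hexp : ⟪deriv u t, w⟫ = ⟪deriv u t, u t⟫ + (1/6 : ℝ) * ⟪deriv u t, q t⟫
        + (1/3 : ℝ) * ⟪deriv u t, cwMul (a t) (u t)⟫ := by
      rw [hw, inner_add_right, inner_add_right, real_inner_smul_right,
        real_inner_smul_right]
    have hq3 : ⟪cwMul (a t) (u t), deriv u t⟫ = ⟪deriv u t, cwMul (a t) (u t)⟫ :=
      real_inner_comm _ _
    have hqsym : ⟪q t, deriv u t⟫ = ⟪deriv u t, q t⟫ := real_inner_comm _ _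
    rw [hsym, hq'', hq3] at *
    nlinarith [hmain, hexp]
  have hEd : Differentiable ℝ E := fun t => (key t).differentiableAt
  have hEz : ∀ t, deriv E t = 0 := fun t => (key t).deriv
  intro t₁ t₂
  exact is_const_of_deriv_eq_zero hEd hEz t₁ t₂
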